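/- Suppose f ∈ H has the (a,δ)-stable approximation property: there exists z ∈ ℂᴺ with ‖f − T_N z‖ ≤ δ‖f‖ and ‖z‖ ≤ a‖f‖, where 0 < δ < 1, a > 0. Then the TSVD approximation with threshold ε satisfies ‖f − P_Λ f‖ ≤ (δ + a√ε)‖f‖. -/

import Mathlib

open scoped ComplexInnerProductSpace

theorem stmt_14 {H : Type*} [NormedAddCommGroup H] [InnerProductSpace ℂ H]
    {N : ℕ} (φ : Fin N → H) (σ : Fin N → ℝ)
    (v : Fin N → EuclideanSpace ℂ (Fin N)) (hv : Orthonormal ℂ v)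
    (G : Matrix (Fin N) (Fin N) ℂ) (hG : ∀ m k, G m k = ⟪φ m, φ k⟫)
    (heig : ∀ n i, G.mulVec (fun j => v n j) i = (σ n : ℂ) * v n i)
    (T : EuclideanSpace ℂ (Fin N) → H) (hT : ∀ z, T z = ∑ n, z n • φ n)
    (ξ : Fin N → H) (hξ : ∀ n, ξ n = T (v n))
    (hσ : ∀ n, 0 ≤ σ n) (ε : ℝ) (hε : 0 < ε)
    (f : H) (a δ : ℝ) (ha : 0 < a) (hδ0 : 0 < δ) (hδ1 : δ < 1)
    (hstable : ∃ z : EuclideanSpace ℂ (Fin N),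
      ‖f - T z‖ ≤ δ * ‖f‖ ∧ ‖z‖ ≤ a * ‖f‖) :
    ‖f - ∑ n ∈ Finset.univ.filter (fun n => ε < σ n),
        (⟪ξ n, f⟫ / (σ n : ℂ)) • ξ n‖ ≤
      (δ + a * Real.sqrt ε) * ‖f‖ := by
  classical
  obtain ⟨z, hz1, hz2⟩ := hstable
  set Λ : Finset (Fin N) := Finset.univ.filter (fun n => ε < σ n) with hΛdef
  set P : H → H := fun x => ∑ n ∈ Λ, (⟪ξ n, x⟫ / (σ n : ℂ)) • ξ n with hPdef
  show ‖f - P f‖ ≤ (δ + a * Real.sqrt ε) * ‖f‖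
  have hσΛ : ∀ n ∈ Λ, (σ n : ℂ) ≠ 0 := by
    intro n hn
    rw [hΛdef, Finset.mem_filter] at hn
    exact_mod_cast ne_of_gt (lt_trans hε hn.2)
  have hkey : ∀ x : ℂ, (starRingEnd ℂ) x * x = ((‖x‖ ^ 2 : ℝ) : ℂ) := by
    intro x
    rw [mul_comm, Complex.mul_conj]
    norm_cast
    rw [Complex.normSq_eq_norm_sq]
  -- inner products of the v's
  have hvinner : ∀ m n, ⟪v m, v n⟫ = if m = n then (1 : ℂ) else 0 := fun m n =>
    orthonormal_iff_ite.mp hv m n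
  have hGv : ∀ n i, ∑ j, G i j * v n j = (σ n : ℂ) * v n i := by
    intro n i
    have := heig n i
    rwa [Matrix.mulVec, dotProduct] at this
  -- inner products of the ξ's
  have hinner : ∀ m n, ⟪ξ m, ξ n⟫ = if m = n then (σ n : ℂ) else 0 := by
    intro m n
    have h1 : ⟪ξ m, ξ n⟫ = ∑ i, (starRingEnd ℂ) (v m i) * ((σ n : ℂ) * v n i) := by
      rw [hξ, hξ, hT, hT, sum_inner]
      refine Finset.sum_congr rfl fun i _ => ?_
      rw [inner_smul_left, inner_sum]
      congr 1
      rw [← hGv n i]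
      refine Finset.sum_congr rfl fun j _ => ?_
      rw [inner_smul_right, hG i j]
      ring
    have h2 : ∑ i, (starRingEnd ℂ) (v m i) * ((σ n : ℂ) * v n i)
        = (σ n : ℂ) * ⟪v m, v n⟫ := by
      rw [PiLp.inner_apply, Finset.mul_sum]
      refine Finset.sum_congr rfl fun i _ => ?_
      rw [RCLike.inner_apply]
      ring
    rw [h1, h2, hvinner]
    split <;> simp
  -- ⟪ξ m, P x⟫ = ⟪ξ m, x⟫ for m ∈ Λ
  have hPxi : ∀ x, ∀ m ∈ Λ, ⟪ξ m, P x⟫ = ⟪ξ m, x⟫ := by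
    intro x m hm
    rw [hPdef]
    simp only [inner_sum, inner_smul_right]
    rw [Finset.sum_eq_single m]
    · rw [hinner m m, if_pos rfl, div_mul_cancel₀ _ (hσΛ m hm)]
    · intro n hn hne
      rw [hinner m n, if_neg (Ne.symm hne), mul_zero]
    · intro h; exact absurd hm h
  -- residual orthogonality
  have hresid : ∀ x y, ⟪P y, x - P x⟫ = 0 := by
    intro x y
    rw [hPdef]
    simp only [sum_inner, inner_smul_left]
    refine Finset.sum_eq_zero fun n hn => ?_
    rw [inner_sub_right, hPxi x n hn, sub_self, mul_zero]
  -- contraction property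
  have hcontr : ∀ x, ‖x - P x‖ ≤ ‖x‖ := by
    intro x
    have h0 : ⟪x - P x, P x⟫ = 0 := by
      rw [← inner_conj_symm, hresid, map_zero]
    have hpyth : ‖x‖ * ‖x‖ = ‖x - P x‖ * ‖x - P x‖ + ‖P x‖ * ‖P x‖ := by
      have := norm_add_sq_eq_norm_sq_add_norm_sq_of_inner_eq_zero (x - P x) (P x) h0
      rwa [sub_add_cancel] at this
    have h1 : ‖x - P x‖ ^ 2 ≤ ‖x‖ ^ 2 := by nlinarith [mul_self_nonneg ‖P x‖]
    calc ‖x - P x‖ = Real.sqrt (‖x - P x‖ ^ 2) := (Real.sqrt_sq (norm_nonneg _)).symm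
      _ ≤ Real.sqrt (‖x‖ ^ 2) := Real.sqrt_le_sqrt h1
      _ = ‖x‖ := Real.sqrt_sq (norm_nonneg _)
  -- orthonormal basis from v
  have hsp : ⊤ ≤ Submodule.span ℂ (Set.range v) := by
    rw [hv.linearIndependent.span_eq_top_of_card_eq_finrank' (by simp)]
  set b : OrthonormalBasis (Fin N) ℂ (EuclideanSpace ℂ (Fin N)) :=
    OrthonormalBasis.mk hv hsp with hbdef
  have hb : ∀ n, b n = v n := fun n => by rw [hbdef, OrthonormalBasis.coe_mk]
  set c : Fin N → ℂ := fun n => ⟪v n, z⟫ with hcdef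
  have hz : z = ∑ n, c n • v n := by
    conv_lhs => rw [← b.sum_repr' z]
    exact Finset.sum_congr rfl fun n _ => by rw [hb]
  have hnormz : ‖z‖ ^ 2 = ∑ n, ‖c n‖ ^ 2 := by
    have hci : ⟪z, z⟫ = ((∑ n, ‖c n‖ ^ 2 : ℝ) : ℂ) := by
      conv_lhs => rw [hz]
      rw [sum_inner]
      push_cast
      refine Finset.sum_congr rfl fun m _ => ?_
      rw [inner_smul_left, inner_sum]
      rw [Finset.sum_eq_single m]
      · rw [inner_smul_right, hvinner m m, if_pos rfl, mul_one, hkey]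
        push_cast; ring
      · intro n _ hne
        rw [inner_smul_right, hvinner m n, if_neg (Ne.symm hne)]; ring
      · simp
    rw [← inner_self_eq_norm_sq (𝕜 := ℂ) z, hci]
    exact Complex.ofReal_re _
  -- T z as combination of ξ's
  have hTz : T z = ∑ n, c n • ξ n := by
    rw [hT]
    have hzi : ∀ i, z i = ∑ n, c n * v n i := by
      intro i
      conv_lhs => rw [hz]
      rw [WithLp.ofLp_sum, Finset.sum_apply]
      rfl
    calc ∑ i, z i • φ i = ∑ i, ∑ n, (c n * v n i) • φ i := by
          refine Finset.sum_congr rfl fun i _ => ?_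
          rw [hzi i, Finset.sum_smul]
      _ = ∑ n, ∑ i, (c n * v n i) • φ i := Finset.sum_comm
      _ = ∑ n, c n • ξ n := by
          refine Finset.sum_congr rfl fun n _ => ?_
          rw [hξ, hT, Finset.smul_sum]
          exact Finset.sum_congr rfl fun i _ => by rw [mul_smul]
  have hPTz : P (T z) = ∑ n ∈ Λ, c n • ξ n := by
    rw [hPdef]
    refine Finset.sum_congr rfl fun m hm => ?_
    congr 1
    rw [hTz]
    simp only [inner_sum, inner_smul_right]
    rw [Finset.sum_eq_single m]
    · rw [hinner m m, if_pos rfl, mul_div_assoc, div_self (hσΛ m hm), mul_one]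
    · intro n _ hne
      rw [hinner m n, if_neg (Ne.symm hne), mul_zero]
    · simp
  have hdiff : T z - P (T z) = ∑ n ∈ Λᶜ, c n • ξ n := by
    rw [hPTz, hTz, ← Finset.sum_compl_add_sum Λ (fun n => c n • ξ n), add_sub_cancel_right]
  -- norm of the tail
  have htail : ‖∑ n ∈ Λᶜ, c n • ξ n‖ ^ 2 = ∑ n ∈ Λᶜ, ‖c n‖ ^ 2 * σ n := by
    have hci : ⟪∑ n ∈ Λᶜ, c n • ξ n, ∑ n ∈ Λᶜ, c n • ξ n⟫
        = ((∑ n ∈ Λᶜ, ‖c n‖ ^ 2 * σ n : ℝ) : ℂ) := by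
      rw [sum_inner]
      push_cast
      refine Finset.sum_congr rfl fun m hm => ?_
      rw [inner_smul_left, inner_sum]
      rw [Finset.sum_eq_single m]
      · rw [inner_smul_right, hinner m m, if_pos rfl, ← mul_assoc, hkey]
        push_cast; ring
      · intro n _ hne
        rw [inner_smul_right, hinner m n, if_neg (Ne.symm hne)]; ring
      · intro h; exact absurd hm h
    rw [← inner_self_eq_norm_sq (𝕜 := ℂ) (∑ n ∈ Λᶜ, c n • ξ n), hci]
    exact Complex.ofReal_re _
  have htail2 : ‖T z - P (T z)‖ ^ 2 ≤ ε * ‖z‖ ^ 2 := by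
    rw [hdiff, htail, hnormz, Finset.mul_sum]
    calc ∑ n ∈ Λᶜ, ‖c n‖ ^ 2 * σ n ≤ ∑ n ∈ Λᶜ, ε * ‖c n‖ ^ 2 := by
          refine Finset.sum_le_sum fun n hn => ?_
          have : ¬ ε < σ n := by
            rw [Finset.mem_compl, hΛdef, Finset.mem_filter] at hn
            intro h; exact hn (by simp [h])
          rw [mul_comm]
          exact mul_le_mul_of_nonneg_right (not_lt.mp this) (sq_nonneg _)
      _ ≤ ∑ n, ε * ‖c n‖ ^ 2 := by
          refine Finset.sum_le_sum_of_subset_of_nonneg (Finset.subset_univ _)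
            fun n _ _ => mul_nonneg hε.le (sq_nonneg _)
  have htail3 : ‖T z - P (T z)‖ ≤ Real.sqrt ε * ‖z‖ := by
    have h1 : ‖T z - P (T z)‖ = Real.sqrt (‖T z - P (T z)‖ ^ 2) := by
      rw [Real.sqrt_sq (norm_nonneg _)]
    rw [h1]
    calc Real.sqrt (‖T z - P (T z)‖ ^ 2) ≤ Real.sqrt (ε * ‖z‖ ^ 2) :=
          Real.sqrt_le_sqrt htail2
      _ = Real.sqrt ε * ‖z‖ := by
          rw [Real.sqrt_mul hε.le, Real.sqrt_sq (norm_nonneg _)]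
  -- linearity split
  have hPadd : P f = P (f - T z) + P (T z) := by
    rw [hPdef]
    simp only
    rw [← Finset.sum_add_distrib]
    refine Finset.sum_congr rfl fun n _ => ?_
    rw [inner_sub_right, sub_div, sub_smul, sub_add_cancel]
  have hsplit : f - P f = ((f - T z) - P (f - T z)) + (T z - P (T z)) := by
    rw [hPadd]; abel
  calc ‖f - P f‖ = ‖((f - T z) - P (f - T z)) + (T z - P (T z))‖ := by rw [hsplit]
    _ ≤ ‖(f - T z) - P (f - T z)‖ + ‖T z - P (T z)‖ := norm_add_le _ _
    _ ≤ ‖f - T z‖ + Real.sqrt ε * ‖z‖ := add_le_add (hcontr _) htail3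
    _ ≤ δ * ‖f‖ + Real.sqrt ε * (a * ‖f‖) := add_le_add hz1
        (mul_le_mul_of_nonneg_left hz2 (Real.sqrt_nonneg ε))
    _ = (δ + a * Real.sqrt ε) * ‖f‖ := by ring
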